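/- Let g = [[A, B], [C, D]] ∈ O(n,n|ℝ) and let θ be an n×n real skew-symmetric matrix such that Cθ + D is invertible. Then the matrix gθ := (Aθ + B)(Cθ + D)⁻¹ is skew-symmetric. -/
import Mathlib


open Matrix

theorem stmt4 (n : ℕ) (A B C D θ : Matrix (Fin n) (Fin n) ℝ)
    (hg : (Matrix.fromBlocks A B C D)ᵀ * Matrix.fromBlocks 0 1 1 0 * Matrix.fromBlocks A B C D
      = Matrix.fromBlocks 0 1 1 0)
    (hθ : θᵀ = -θ) (hinv : IsUnit (C * θ + D)) :
    ((A * θ + B) * (C * θ + D)⁻¹)ᵀ = -((A * θ + B) * (C * θ + D)⁻¹) := by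
  rw [Matrix.fromBlocks_transpose, Matrix.fromBlocks_multiply, Matrix.fromBlocks_multiply] at hg
  have h11 : Cᵀ * A + Aᵀ * C = 0 := by
    have := congrArg Matrix.toBlocks₁₁ hg
    simpa [Matrix.toBlocks_fromBlocks₁₁] using this
  have h12 : Cᵀ * B + Aᵀ * D = 1 := by
    have := congrArg Matrix.toBlocks₁₂ hg
    simpa [Matrix.toBlocks_fromBlocks₁₂] using this
  have h21 : Dᵀ * A + Bᵀ * C = 1 := by
    have := congrArg Matrix.toBlocks₂₁ hg
    simpa [Matrix.toBlocks_fromBlocks₂₁] using this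
  have h22 : Dᵀ * B + Bᵀ * D = 0 := by
    have := congrArg Matrix.toBlocks₂₂ hg
    simpa [Matrix.toBlocks_fromBlocks₂₂] using this
  set P := A * θ + B
  set Q := C * θ + D
  have key : Pᵀ * Q = -(Qᵀ * P) := by
    have expand : Pᵀ * Q + Qᵀ * P
        = θᵀ * (Cᵀ * A + Aᵀ * C) * θ + θᵀ * (Cᵀ * B + Aᵀ * D)
          + (Dᵀ * A + Bᵀ * C) * θ + (Dᵀ * B + Bᵀ * D) := by
      simp only [P, Q, Matrix.transpose_add, Matrix.transpose_mul]
      noncomm_ring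
    have : Pᵀ * Q + Qᵀ * P = 0 := by
      rw [expand, h11, h12, h21, h22, hθ]
      simp
    linear_combination (norm := noncomm_ring) this
  have hQ : Invertible Q := hinv.invertible
  have hQT : Invertible Qᵀ := Q.invertibleTranspose
  have : (Qᵀ)⁻¹ * (Pᵀ * Q) * Q⁻¹ = (Qᵀ)⁻¹ * (-(Qᵀ * P)) * Q⁻¹ := by rw [key]
  rw [Matrix.transpose_mul, Matrix.transpose_nonsing_inv]
  calc (Qᵀ)⁻¹ * Pᵀ = (Qᵀ)⁻¹ * (Pᵀ * Q) * Q⁻¹ := by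
        rw [Matrix.mul_assoc, Matrix.mul_assoc, Matrix.mul_nonsing_inv _ ((Matrix.isUnit_iff_isUnit_det Q).mp hinv),
          Matrix.mul_one]
      _ = (Qᵀ)⁻¹ * (-(Qᵀ * P)) * Q⁻¹ := by rw [key]
      _ = -(P * Q⁻¹) := by
        rw [Matrix.mul_neg, Matrix.neg_mul, ← Matrix.mul_assoc,
          Matrix.nonsing_inv_mul _ (by rw [Matrix.det_transpose]; exact (Matrix.isUnit_iff_isUnit_det Q).mp hinv),
          Matrix.one_mul]
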